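/- Let F be a finite field with at least 7 elements, V a 2-dimensional F-vector space, q : V → F a non-degenerate anisotropic quadratic form, and a ∈ F with a ≠ 0. Then diam(G_{q,a}) ≥ 3; that is, there exist vertices u, v ∈ V with graph distance d(u,v) ≥ 3 in G_{q,a}. -/

import Mathlib

open QuadraticMap Module

/-- The representation graph `G_{q,a}`: vertices are the vectors of `V`, and distinct
`x, y` are adjacent iff `q (x - y) = a`. -/
def repGraph {F V : Type*} [Field F] [AddCommGroup V] [Module F V]
    (q : QuadraticForm F V) (a : F) : SimpleGraph V where
  Adj x y := x ≠ y ∧ q (x - y) = a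
  symm := by
    constructor
    rintro x y ⟨hxy, h⟩
    refine ⟨hxy.symm, ?_⟩
    rw [← neg_sub x y, QuadraticMap.map_neg]
    exact h
  loopless := by constructor; rintro x ⟨h, -⟩; exact h rfl

section Aux

variable {F V : Type*} [Field F] [AddCommGroup V] [Module F V]

/-- Expansion of a quadratic form along a line. -/
lemma qf_expand (q : QuadraticForm F V) (p v : V) (t : F) :
    q (p + t • v) = q p + t * polar (⇑q) p v + t * t * q v := by
  have h0 : polar (⇑q) p (t • v) = q (p + t • v) - q p - q (t • v) := rfl
  have h1 : polar (⇑q) p (t • v) = t * polar (⇑q) p v := by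
    rw [polar_smul_right]; simp [smul_eq_mul]
  have h2 : q (t • v) = t * t * q v := by
    rw [QuadraticMap.map_smul]; simp [smul_eq_mul]
  rw [h1, h2] at h0
  linear_combination -h0

/-- A line in an anisotropic direction meets a "sphere" through its base point in at most
one further point. -/
lemma line_unique (q : QuadraticForm F V) (haniso : ∀ v : V, q v = 0 → v = 0)
    (p v : V) (hv : v ≠ 0) (s t : F) (hs : s ≠ 0) (ht : t ≠ 0)
    (h1 : q (p + s • v) = q p) (h2 : q (p + t • v) = q p) : s = t := by
  have hqv : q v ≠ 0 := fun h => hv (haniso v h)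
  rw [qf_expand] at h1 h2
  have e1 : polar (⇑q) p v + s * q v = 0 := by
    have : s * (polar (⇑q) p v + s * q v) = 0 := by ring_nf; linear_combination h1
    rcases mul_eq_zero.mp this with h | h
    · exact absurd h hs
    · exact h
  have e2 : polar (⇑q) p v + t * q v = 0 := by
    have : t * (polar (⇑q) p v + t * q v) = 0 := by ring_nf; linear_combination h2
    rcases mul_eq_zero.mp this with h | h
    · exact absurd h ht
    · exact h
  have : (s - t) * q v = 0 := by linear_combination e1 - e2
  rcases mul_eq_zero.mp this with h | h
  · exact sub_eq_zero.mp h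
  · exact absurd h hqv

/-- Two nonzero vectors in a plane with the same "slope" relative to a basis are
proportional. -/
lemma slope_prop (e : Basis (Fin 2) F V) (w w' : V) (hw : w ≠ 0)
    (hsl : (e.repr w 1 = 0 ∧ e.repr w' 1 = 0) ∨
      (e.repr w 1 ≠ 0 ∧ e.repr w' 1 ≠ 0 ∧ e.repr w 0 / e.repr w 1 = e.repr w' 0 / e.repr w' 1)) :
    ∃ k : F, w' = k • w := by
  have hrepr : ∀ u : V, u = e.repr u 0 • e 0 + e.repr u 1 • e 1 := by
    intro u
    have := e.sum_repr u
    rw [Fin.sum_univ_two] at this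
    exact this.symm
  obtain ⟨k, hk0, hk1⟩ : ∃ k : F, k * e.repr w 0 = e.repr w' 0 ∧ k * e.repr w 1 = e.repr w' 1 := by
    rcases hsl with ⟨h1, h1'⟩ | ⟨h1, h1', hsl'⟩
    · have h0 : e.repr w 0 ≠ 0 := by
        intro hc
        apply hw
        rw [hrepr w, hc, h1]
        simp
      exact ⟨e.repr w' 0 / e.repr w 0, div_mul_cancel₀ _ h0, by rw [h1, h1', mul_zero]⟩
    · have hcross : e.repr w 0 * e.repr w' 1 = e.repr w' 0 * e.repr w 1 :=
        (div_eq_div_iff h1 h1').mp hsl'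
      refine ⟨e.repr w' 1 / e.repr w 1, ?_, div_mul_cancel₀ _ h1⟩
      field_simp
      linear_combination hcross
  refine ⟨k, ?_⟩
  conv_lhs => rw [hrepr w']
  rw [← hk0, ← hk1]
  conv_rhs => rw [hrepr w]
  rw [smul_add, smul_smul, smul_smul]

end Aux

/-- Over a finite field with at least 7 elements, a 2-dimensional non-degenerate
anisotropic form `q` and `a ≠ 0` yield `diam G_{q,a} ≥ 3`; that is, some pair of vertices
has distance at least `3`. -/
theorem stmt_12 {F V : Type*} [Field F] [Fintype F] (hF : 7 ≤ Fintype.card F)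
    [AddCommGroup V] [Module F V]
    (q : QuadraticForm F V) (hdim : Module.finrank F V = 2)
    (hnd : ∀ x : V, (∀ y : V, polar (⇑q) x y = 0) → x = 0)
    (haniso : ∀ v : V, q v = 0 → v = 0)
    (a : F) (ha : a ≠ 0) :
    3 ≤ (repGraph q a).ediam ∧ ∃ u v : V, 3 ≤ (repGraph q a).edist u v := by
  classical
  set n := Fintype.card F with hn
  haveI : Module.Finite F V := Module.finite_of_finrank_eq_succ (n := 1) (by simpa using hdim)
  haveI : Finite V := Module.finite_of_finite F
  haveI : Fintype V := Fintype.ofFinite V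
  have hcardV : Fintype.card V = n ^ 2 := by
    rw [card_eq_pow_finrank (K := F) (V := V), hdim]
  -- the sphere
  set S : Finset V := Finset.univ.filter (fun x => q x = a) with hS
  -- Step 1 : |S| ≤ n + 1
  have hScard : S.card ≤ n + 1 := by
    rcases S.eq_empty_or_nonempty with hE | ⟨p, hp⟩
    · rw [hE]; simp
    have hqp : q p = a := (Finset.mem_filter.mp hp).2
    have hp0 : p ≠ 0 := by
      intro hc; rw [hc] at hqp; simp at hqp; exact ha hqp.symm
    -- tangent direction
    obtain ⟨v, hv0, hpv⟩ : ∃ v : V, v ≠ 0 ∧ polar (⇑q) p v = 0 := by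
      set f : V →ₗ[F] F := polarBilin q p with hf
      have hker : LinearMap.ker f ≠ ⊥ := by
        intro hbot
        have h1 := LinearMap.finrank_range_add_finrank_ker f
        rw [hbot, hdim] at h1
        simp only [finrank_bot, add_zero] at h1
        have h2 : finrank F ↥(LinearMap.range f) ≤ finrank F F :=
          Submodule.finrank_le _
        rw [Module.finrank_self] at h2
        omega
      obtain ⟨v, hvmem, hv0⟩ := Submodule.exists_mem_ne_zero_of_ne_bot hker
      refine ⟨v, hv0, ?_⟩
      have := LinearMap.mem_ker.mp hvmem
      simpa [hf, polarBilin] using this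
    set e : Basis (Fin 2) F V := Module.finBasisOfFinrankEq F V hdim with he
    set slope : V → Option F := fun w =>
      if e.repr w 1 = 0 then (none : Option F) else some (e.repr w 0 / e.repr w 1)
      with hslope
    have key : ∀ w w' : V, w ≠ 0 → slope w = slope w' → ∃ k : F, w' = k • w := by
      intro w w' hw hsl
      apply slope_prop e w w' hw
      simp only [hslope] at hsl
      by_cases h1 : e.repr w 1 = 0
      · refine Or.inl ⟨h1, ?_⟩
        by_contra h2
        rw [if_pos h1, if_neg h2] at hsl
        exact absurd hsl (by simp)
      · by_cases h2 : e.repr w' 1 = 0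
        · rw [if_neg h1, if_pos h2] at hsl
          exact absurd hsl (by simp)
        · rw [if_neg h1, if_neg h2, Option.some.injEq] at hsl
          exact Or.inr ⟨h1, h2, hsl⟩
    -- the map x ↦ slope (x - p) is injective on S.erase p, avoiding slope v
    have hinj : Set.InjOn (fun x => slope (x - p)) ↑(S.erase p) := by
      intro x hx y hy hxy
      simp only [Finset.coe_erase, Set.mem_diff, Finset.mem_coe, Set.mem_singleton_iff] at hx hy
      have hxp : x - p ≠ 0 := sub_ne_zero.mpr hx.2
      have hyp : y - p ≠ 0 := sub_ne_zero.mpr hy.2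
      obtain ⟨k, hk⟩ := key (x - p) (y - p) hxp hxy
      have hk0 : k ≠ 0 := by
        intro hc; rw [hc, zero_smul] at hk; exact hyp hk
      have hqx : q x = a := (Finset.mem_filter.mp hx.1).2
      have hqy : q y = a := (Finset.mem_filter.mp hy.1).2
      have h1 : q (p + (1 : F) • (x - p)) = q p := by
        rw [one_smul]; simp [hqx, hqp]
      have h2 : q (p + k • (x - p)) = q p := by
        rw [← hk]; simp [hqy, hqp]
      have : (1 : F) = k := line_unique q haniso p (x - p) hxp 1 k one_ne_zero hk0 h1 h2
      have : y - p = x - p := by rw [hk, ← this, one_smul]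
      exact sub_left_injective this.symm
    have hmaps : ∀ x ∈ S.erase p, slope (x - p) ∈ Finset.univ.erase (slope v) := by
      intro x hx
      rw [Finset.mem_erase] at hx ⊢
      refine ⟨?_, Finset.mem_univ _⟩
      intro hsl
      have hxp : x - p ≠ 0 := sub_ne_zero.mpr hx.1
      obtain ⟨k, hk⟩ := key v (x - p) hv0 hsl.symm
      have hk0 : k ≠ 0 := by
        intro hc; rw [hc, zero_smul] at hk; exact hxp hk
      have hqx : q x = a := (Finset.mem_filter.mp hx.2).2
      have hx' : x = p + k • v := by rw [← hk]; abel
      rw [hx', qf_expand, hqp, hpv] at hqx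
      have : k * k * q v = 0 := by linear_combination hqx
      have hqv : q v = 0 := by
        rcases mul_eq_zero.mp this with h | h
        · exact absurd (by rcases mul_eq_zero.mp h with h' | h' <;> exact h') hk0
        · exact h
      exact hv0 (haniso v hqv)
    have hc1 : (S.erase p).card ≤ (Finset.univ.erase (slope v)).card :=
      Finset.card_le_card_of_injOn _ hmaps hinj
    have hc2 : (Finset.univ.erase (slope v)).card = n := by
      rw [Finset.card_erase_of_mem (Finset.mem_univ _), Finset.card_univ,
        Fintype.card_option]
      omega
    have hc3 : S.card = (S.erase p).card + 1 := by
      rw [Finset.card_erase_of_mem hp]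
      have : 1 ≤ S.card := Finset.card_pos.mpr ⟨p, hp⟩
      omega
    omega
  -- Step 2 : counting the ball of radius 2 around 0
  set T : Finset V := Finset.univ.filter (fun z => ∃ x, q x = a ∧ q (z - x) = a) with hT
  set T' : Finset V := T.erase 0 with hT'
  set W : Finset (V × V) := (S ×ˢ S).filter (fun p => p.1 + p.2 ≠ 0) with hW
  set twoS : Finset V := S.image (fun x => x + x) with htwoS
  have hWmem : ∀ p ∈ W, p.1 + p.2 ∈ T' := by
    rintro ⟨x, y⟩ hp
    rw [Finset.mem_filter] at hp
    rw [Finset.mem_product, Finset.mem_filter, Finset.mem_filter] at hp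
    obtain ⟨⟨⟨-, hx⟩, ⟨-, hy⟩⟩, hxy⟩ := hp
    rw [Finset.mem_erase]
    refine ⟨hxy, Finset.mem_filter.mpr ⟨Finset.mem_univ _, ⟨x, hx, ?_⟩⟩⟩
    simpa using hy
  have hWsum : W.card = ∑ z ∈ T', (W.filter (fun p => p.1 + p.2 = z)).card :=
    Finset.card_eq_sum_card_fiberwise hWmem
  have hfiber1 : ∀ z ∈ T' ∩ twoS, 1 ≤ (W.filter (fun p => p.1 + p.2 = z)).card := by
    intro z hz
    rw [Finset.mem_inter] at hz
    have hz' := Finset.mem_erase.mp hz.1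
    obtain ⟨x, hx, hzx⟩ := (Finset.mem_filter.mp hz'.2).2
    refine Finset.card_pos.mpr ⟨(x, z - x), ?_⟩
    rw [Finset.mem_filter, Finset.mem_filter, Finset.mem_product]
    refine ⟨⟨⟨Finset.mem_filter.mpr ⟨Finset.mem_univ _, hx⟩,
      Finset.mem_filter.mpr ⟨Finset.mem_univ _, hzx⟩⟩, ?_⟩, by simp⟩
    simp only [add_sub_cancel]
    exact hz'.1
  have hfiber2 : ∀ z ∈ T' \ twoS, 2 ≤ (W.filter (fun p => p.1 + p.2 = z)).card := by
    intro z hz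
    rw [Finset.mem_sdiff] at hz
    have hz' := Finset.mem_erase.mp hz.1
    obtain ⟨x, hx, hzx⟩ := (Finset.mem_filter.mp hz'.2).2
    have hxS : x ∈ S := Finset.mem_filter.mpr ⟨Finset.mem_univ _, hx⟩
    have hzxS : z - x ∈ S := Finset.mem_filter.mpr ⟨Finset.mem_univ _, hzx⟩
    have hne : x ≠ z - x := by
      intro hc
      apply hz.2
      rw [htwoS, Finset.mem_image]
      refine ⟨x, hxS, ?_⟩
      nth_rewrite 2 [hc]
      simp
    have h1 : (x, z - x) ∈ W.filter (fun p => p.1 + p.2 = z) := by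
      rw [Finset.mem_filter, Finset.mem_filter, Finset.mem_product]
      exact ⟨⟨⟨hxS, hzxS⟩, by simpa using hz'.1⟩, by simp⟩
    have h2 : (z - x, x) ∈ W.filter (fun p => p.1 + p.2 = z) := by
      rw [Finset.mem_filter, Finset.mem_filter, Finset.mem_product]
      exact ⟨⟨⟨hzxS, hxS⟩, by simpa using hz'.1⟩, by simp⟩
    have hne2 : (x, z - x) ≠ (z - x, x) := by
      intro hc
      exact hne (congrArg Prod.fst hc)
    calc 2 = ({(x, z - x), (z - x, x)} : Finset (V × V)).card := by
              rw [Finset.card_insert_of_notMem (by simp [hne2]), Finset.card_singleton]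
      _ ≤ _ := Finset.card_le_card (by
              intro p hp
              simp only [Finset.mem_insert, Finset.mem_singleton] at hp
              rcases hp with rfl | rfl
              · exact h1
              · exact h2)
  have hT'card : 2 * T'.card ≤ S.card ^ 2 + S.card := by
    have hsplit : T'.card = (T' ∩ twoS).card + (T' \ twoS).card := by
      rw [Finset.card_inter_add_card_sdiff]
    have hsum1 : (T' ∩ twoS).card * 1 ≤ ∑ z ∈ T' ∩ twoS,
        (W.filter (fun p => p.1 + p.2 = z)).card := by
      simpa using Finset.card_nsmul_le_sum (T' ∩ twoS) _ 1 hfiber1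
    have hsum2 : (T' \ twoS).card * 2 ≤ ∑ z ∈ T' \ twoS,
        (W.filter (fun p => p.1 + p.2 = z)).card := by
      simpa using Finset.card_nsmul_le_sum (T' \ twoS) _ 2 hfiber2
    have hsumsplit : ∑ z ∈ T' ∩ twoS, (W.filter (fun p => p.1 + p.2 = z)).card
        + ∑ z ∈ T' \ twoS, (W.filter (fun p => p.1 + p.2 = z)).card
        = ∑ z ∈ T', (W.filter (fun p => p.1 + p.2 = z)).card := by
      rw [Finset.sum_inter_add_sum_sdiff]
    have hWcard : W.card ≤ S.card ^ 2 := by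
      calc W.card ≤ (S ×ˢ S).card := Finset.card_le_card (Finset.filter_subset _ _)
        _ = S.card ^ 2 := by rw [Finset.card_product]; ring
    have htwoScard : (T' ∩ twoS).card ≤ S.card := by
      calc (T' ∩ twoS).card ≤ twoS.card := Finset.card_le_card (Finset.inter_subset_right)
        _ ≤ S.card := Finset.card_image_le
    omega
  -- the ball of radius 2
  set B2 : Finset V := insert 0 (S ∪ T) with hB2
  have hB2card : B2.card < Fintype.card V := by
    have h1 : B2.card ≤ 1 + (S.card + T.card) :=
      le_trans (Finset.card_insert_le _ _) (by
        have := Finset.card_union_le S T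
        omega)
    have h2 : T.card ≤ T'.card + 1 := by
      rw [hT']
      have := Finset.card_erase_add_one (s := T) (a := (0 : V))
      by_cases h0 : (0 : V) ∈ T
      · rw [Finset.card_erase_of_mem h0]
        omega
      · rw [Finset.erase_eq_of_notMem h0]
        omega
    rw [hcardV]
    have hn7 : 7 ≤ n := hF
    nlinarith [hScard, hT'card, h1, h2]
  -- there is a vertex outside the ball
  obtain ⟨z, hz⟩ : ∃ z : V, z ∉ B2 := by
    by_contra hc
    push_neg at hc
    have : (Finset.univ : Finset V) ⊆ B2 := fun x _ => hc x
    have := Finset.card_le_card this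
    rw [Finset.card_univ] at this
    omega
  -- distance from 0 to z is at least 3
  have hdist : 3 ≤ (repGraph q a).edist 0 z := by
    by_contra hlt
    push_neg at hlt
    have hne : (repGraph q a).edist 0 z ≠ ⊤ := by
      intro hc; rw [hc] at hlt; exact absurd hlt (by simp)
    obtain ⟨w, hw⟩ := SimpleGraph.exists_walk_of_edist_ne_top hne
    have hlen : w.length ≤ 2 := by
      have : (w.length : ℕ∞) < 3 := by rw [hw]; exact hlt
      exact_mod_cast Nat.lt_succ_iff.mp (by exact_mod_cast this)
    apply hz
    clear hw
    cases w with
    | nil =>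
      rw [hB2]
      exact Finset.mem_insert_self _ _
    | cons h1 w1 =>
      rename_i x
      cases w1 with
      | nil =>
        -- 0 adjacent to z
        have hqz : q z = a := by
          have := h1.2
          rw [zero_sub, QuadraticMap.map_neg] at this
          exact this
        rw [hB2]
        exact Finset.mem_insert_of_mem (Finset.mem_union_left _
          (Finset.mem_filter.mpr ⟨Finset.mem_univ _, hqz⟩))
      | cons h2 w2 =>
        rename_i y
        cases w2 with
        | nil =>
          -- 0 adj x, x adj z
          have hqx : q x = a := by
            have := h1.2
            rw [zero_sub, QuadraticMap.map_neg] at this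
            exact this
          have hqzx : q (z - x) = a := by
            have := h2.2
            rw [← neg_sub z x, QuadraticMap.map_neg] at this
            exact this
          rw [hB2]
          exact Finset.mem_insert_of_mem (Finset.mem_union_right _
            (Finset.mem_filter.mpr ⟨Finset.mem_univ _, ⟨x, hqx, hqzx⟩⟩))
        | cons h3 w3 =>
          exfalso
          simp only [SimpleGraph.Walk.length_cons] at hlen
          omega
  exact ⟨le_trans hdist SimpleGraph.edist_le_ediam, 0, z, hdist⟩
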